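/- Natural boundary at ∞ and unbounded eigenfunctions: let γ(x) = exp(-∫_ξ^x 2k(s)/σ²(s) ds) and suppose ∫_ξ^∞ (2/(σ²(s)γ(s)))∫_ξ^s γ(x) dx ds = ∞ (∞ is a natural boundary). Let h̄ be a positive increasing C² solution of (1/2)σ²h̄'' + kh̄' - rh̄ = -λ̄h̄ (constant r, λ̄ > r) with h̄(ξ) = 1, satisfying C := h̄'(ξ) - 2(λ̄ - r)∫_ξ^∞ h̄(s)/(σ²(s)γ(s)) ds ≥ 0 and h̄'(x) = γ(x)(C + 2(λ̄-r)∫_x^∞ h̄(s)/(σ²(s)γ(s)) ds). Then lim_{x→∞} h̄(x) = ∞. -/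

import Mathlib

open Set MeasureTheory intervalIntegral Filter
open scoped ENNReal

lemma primitive_contOn {f : ℝ → ℝ} {ξ : ℝ} (hξ : 0 < ξ) (hf : ContinuousOn f (Ioi 0)) :
    ContinuousOn (fun x => ∫ t in ξ..x, f t) (Ioi 0) := by
  intro x hx
  have hx0 : (0:ℝ) < x := hx
  have husub : uIcc ξ x ⊆ Ioi 0 := fun t ht => lt_of_lt_of_le (lt_min hξ hx0) ht.1
  have key : HasDerivAt (fun u => ∫ t in ξ..u, f t) (f x) x := by
    apply intervalIntegral.integral_hasDerivAt_right
    · exact (hf.mono husub).intervalIntegrable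
    · exact hf.stronglyMeasurableAtFilter isOpen_Ioi x hx
    · exact hf.continuousAt (isOpen_Ioi.mem_nhds hx)
  exact key.continuousAt.continuousWithinAt

theorem unbounded_at_natural_boundary
    (σ k : ℝ → ℝ) (r lam ξ : ℝ) (hξ : 0 < ξ) (hlam : r < lam)
    (hσc : ContinuousOn σ (Ioi 0)) (hkc : ContinuousOn k (Ioi 0))
    (hσ : ∀ x ∈ Ioi (0:ℝ), 0 < σ x)
    (γ : ℝ → ℝ)
    (hγ : ∀ x, γ x = Real.exp (-∫ s in ξ..x, 2 * k s / (σ s)^2))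
    (hnat : ¬ IntegrableOn
      (fun s => (2 / ((σ s)^2 * γ s)) * ∫ x in ξ..s, γ x) (Ioi ξ) volume)
    (h : ℝ → ℝ) (hh : ContDiffOn ℝ 2 h (Ioi 0))
    (hpos : ∀ x ∈ Ioi (0:ℝ), 0 < h x) (h1 : h ξ = 1)
    (hinc : ∀ x ∈ Ioi (0:ℝ), 0 < deriv h x)
    (hode : ∀ x ∈ Ioi (0:ℝ),
      (1/2) * (σ x)^2 * deriv (deriv h) x + k x * deriv h x - r * h x
        = -lam * h x)
    (hint : IntegrableOn (fun s => h s / ((σ s)^2 * γ s)) (Ioi ξ) volume)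
    (hC : 0 ≤ deriv h ξ - 2*(lam - r) * ∫ s in Ioi ξ, h s / ((σ s)^2 * γ s))
    (hrep : ∀ x ∈ Ici ξ,
      deriv h x = γ x *
        ((deriv h ξ - 2*(lam - r) * ∫ s in Ioi ξ, h s / ((σ s)^2 * γ s))
          + 2*(lam - r) * ∫ s in Ioi x, h s / ((σ s)^2 * γ s))) :
    Tendsto h atTop atTop := by
  -- basic positivity / subset facts
  have hsubI : Ioi ξ ⊆ Ioi (0:ℝ) := fun x hx => lt_trans hξ hx
  have hsubc : Ici ξ ⊆ Ioi (0:ℝ) := fun x hx => lt_of_lt_of_le hξ hx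
  have hγpos : ∀ x, 0 < γ x := fun x => by rw [hγ x]; exact Real.exp_pos _
  have hσγpos : ∀ x ∈ Ioi (0:ℝ), 0 < (σ x)^2 * γ x := fun x hx =>
    mul_pos (pow_pos (hσ x hx) 2) (hγpos x)
  -- continuity of γ
  have hγc : ContinuousOn γ (Ioi 0) := by
    have hfc : ContinuousOn (fun s => 2 * k s / (σ s)^2) (Ioi 0) := by
      apply ContinuousOn.div (continuousOn_const.mul hkc) (hσc.pow 2)
      exact fun x hx => ne_of_gt (pow_pos (hσ x hx) 2)
    have := (primitive_contOn hξ hfc).neg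
    have h2 : ContinuousOn (fun x => Real.exp (-∫ s in ξ..x, 2 * k s / (σ s)^2)) (Ioi 0) :=
      Real.continuous_exp.comp_continuousOn this
    exact (continuousOn_congr (fun x _ => (hγ x))).mpr h2
  -- g := 1/(σ² γ)
  set g : ℝ → ℝ := fun s => 1 / ((σ s)^2 * γ s) with hg_def
  have hgc : ContinuousOn g (Ioi 0) := by
    apply ContinuousOn.div continuousOn_const ((hσc.pow 2).mul hγc)
    exact fun x hx => ne_of_gt (hσγpos x hx)
  have hgpos : ∀ s ∈ Ioi (0:ℝ), 0 < g s := fun s hs => by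
    exact div_pos one_pos (hσγpos s hs)
  -- h is monotone on Ici ξ, hence ≥ 1 there
  have hmono : StrictMonoOn h (Ici ξ) := by
    apply strictMonoOn_of_deriv_pos (convex_Ici ξ)
    · exact (hh.continuousOn).mono hsubc
    · intro x hx
      rw [interior_Ici] at hx
      exact hinc x (hsubI hx)
  have hge1 : ∀ s ∈ Ici ξ, 1 ≤ h s := by
    intro s hs
    rw [← h1]
    exact hmono.monotoneOn self_mem_Ici hs hs
  -- g is integrable on Ioi ξ
  have hgint : IntegrableOn g (Ioi ξ) volume := by
    apply Integrable.mono' hint ((hgc.mono hsubI).aestronglyMeasurable measurableSet_Ioi)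
    filter_upwards [ae_restrict_mem measurableSet_Ioi] with s hs
    have hs0 : s ∈ Ioi (0:ℝ) := hsubI hs
    have h1s : 1 ≤ h s := hge1 s (mem_Ici.mpr (le_of_lt hs))
    rw [Real.norm_eq_abs, abs_of_pos (hgpos s hs0)]
    show 1 / ((σ s)^2 * γ s) ≤ h s / ((σ s)^2 * γ s)
    have hd := hσγpos s hs0
    gcongr
  -- lower bound for deriv h
  set G : ℝ → ℝ := fun x => ∫ s in Ioi x, g s with hG_def
  have hGnonneg : ∀ x, ξ ≤ x → 0 ≤ G x := by
    intro x hx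
    apply setIntegral_nonneg measurableSet_Ioi
    intro s hs
    exact le_of_lt (hgpos s (lt_trans (lt_of_lt_of_le hξ hx) hs))
  have hc0 : (0:ℝ) < 2*(lam - r) := by linarith
  have hlb : ∀ x, ξ ≤ x → 2*(lam - r) * (γ x * G x) ≤ deriv h x := by
    intro x hx
    rw [hrep x hx]
    have hsub' : Ioi x ⊆ Ioi ξ := Ioi_subset_Ioi hx
    have hmon : G x ≤ ∫ s in Ioi x, h s / ((σ s)^2 * γ s) := by
      apply setIntegral_mono_on (hgint.mono_set hsub') (hint.mono_set hsub') measurableSet_Ioi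
      intro s hs
      have hs0 : s ∈ Ioi (0:ℝ) := hsubI (hsub' hs)
      have h1s : 1 ≤ h s := hge1 s (mem_Ici.mpr (le_of_lt (hsub' hs)))
      show 1 / ((σ s)^2*γ s) ≤ h s / ((σ s)^2*γ s)
      have hd := hσγpos s hs0
      gcongr
    have hγx := hγpos x
    have h2 : 2*(lam-r) * G x ≤ 2*(lam-r) * ∫ s in Ioi x, h s / ((σ s)^2 * γ s) :=
      mul_le_mul_of_nonneg_left hmon (le_of_lt hc0)
    calc 2*(lam - r) * (γ x * G x) = γ x * (2*(lam-r) * G x) := by ring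
      _ ≤ γ x * (2*(lam-r) * ∫ s in Ioi x, h s / ((σ s)^2 * γ s)) :=
          mul_le_mul_of_nonneg_left h2 (le_of_lt hγx)
      _ ≤ γ x * ((deriv h ξ - 2*(lam - r) * ∫ s in Ioi ξ, h s / ((σ s)^2 * γ s))
          + 2*(lam - r) * ∫ s in Ioi x, h s / ((σ s)^2 * γ s)) := by
          apply mul_le_mul_of_nonneg_left _ (le_of_lt hγx)
          linarith
  -- FTC
  have hdc : ContinuousOn (deriv h) (Ioi 0) :=
    hh.continuousOn_deriv_of_isOpen isOpen_Ioi (by norm_num)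
  have hdiff : DifferentiableOn ℝ h (Ioi 0) := hh.differentiableOn (by norm_num)
  have hftc : ∀ x, ξ ≤ x → h x = 1 + ∫ t in ξ..x, deriv h t := by
    intro x hx
    have husub : uIcc ξ x ⊆ Ioi 0 := by
      rw [uIcc_of_le hx]; exact fun t ht => lt_of_lt_of_le hξ ht.1
    have heq : ∫ t in ξ..x, deriv h t = h x - h ξ := by
      apply intervalIntegral.integral_eq_sub_of_hasDerivAt
      · intro t ht
        have ht0 : t ∈ Ioi (0:ℝ) := husub ht
        exact ((hdiff t ht0).differentiableAt (isOpen_Ioi.mem_nhds ht0)).hasDerivAt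
      · exact (hdc.mono husub).intervalIntegrable
    rw [heq, h1]; ring
  -- the interchanged kernel
  set Φ : ℝ → ℝ → ℝ≥0∞ := fun t => (Ioi t).indicator
      (fun s' => ENNReal.ofReal (2*(lam-r) * γ t) * ENNReal.ofReal (g s')) with hΦ_def
  -- the key divergence
  have key : (∫⁻ t in Ioi ξ, ENNReal.ofReal (deriv h t)) = ⊤ := by
    rw [eq_top_iff]
    have hswapmeas : AEMeasurable (Function.uncurry Φ)
        ((volume.restrict (Ioi ξ)).prod (volume.restrict (Ioi ξ))) := by
      have hset : MeasurableSet {p : ℝ × ℝ | p.1 < p.2} :=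
        measurableSet_lt measurable_fst measurable_snd
      have hfun : Function.uncurry Φ = Set.indicator {p : ℝ × ℝ | p.1 < p.2}
          (fun p => ENNReal.ofReal ((2*(lam-r) * γ p.1) * g p.2)) := by
        funext p
        by_cases hp : p.1 < p.2 <;>
          simp [Function.uncurry, hΦ_def, indicator_apply, mem_Ioi, Set.mem_setOf_eq, hp,
            ENNReal.ofReal_mul (mul_nonneg hc0.le (hγpos p.1).le)]
      rw [hfun, Measure.prod_restrict]
      apply AEMeasurable.indicator _ hset
      have hcont : ContinuousOn
          (fun p : ℝ×ℝ => ENNReal.ofReal ((2*(lam-r) * γ p.1) * g p.2))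
          ((Ioi ξ) ×ˢ (Ioi ξ)) := by
        apply ENNReal.continuous_ofReal.comp_continuousOn
        apply ContinuousOn.mul
        · exact continuousOn_const.mul
            ((hγc.mono hsubI).comp continuous_fst.continuousOn (fun p hp => hp.1))
        · exact (hgc.mono hsubI).comp continuous_snd.continuousOn (fun p hp => hp.2)
      exact hcont.aemeasurable (measurableSet_Ioi.prod measurableSet_Ioi)
    calc (⊤:ℝ≥0∞)
        = ∫⁻ s in Ioi ξ, ENNReal.ofReal (2*(lam-r) * (g s * ∫ x in ξ..s, γ x)) := by
          symm
          by_contra hfin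
          have hlt : (∫⁻ s in Ioi ξ,
              ENNReal.ofReal (2*(lam-r) * (g s * ∫ x in ξ..s, γ x))) < ⊤ :=
            lt_top_iff_ne_top.mpr hfin
          have hIcont : ContinuousOn (fun s => ∫ x in ξ..s, γ x) (Ioi 0) :=
            primitive_contOn hξ hγc
          have hψc : ContinuousOn (fun s => 2*(lam-r) * (g s * ∫ x in ξ..s, γ x)) (Ioi ξ) :=
            continuousOn_const.mul ((hgc.mono hsubI).mul (hIcont.mono hsubI))
          have hψnn : 0 ≤ᶠ[ae (volume.restrict (Ioi ξ))]
              (fun s => 2*(lam-r) * (g s * ∫ x in ξ..s, γ x)) := by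
            filter_upwards [ae_restrict_mem measurableSet_Ioi] with s hs
            have hInn : 0 ≤ ∫ x in ξ..s, γ x :=
              intervalIntegral.integral_nonneg (le_of_lt hs) (fun u _ => le_of_lt (hγpos u))
            exact mul_nonneg (le_of_lt hc0)
              (mul_nonneg (le_of_lt (hgpos s (hsubI hs))) hInn)
          have hψint : IntegrableOn (fun s => 2*(lam-r) * (g s * ∫ x in ξ..s, γ x))
              (Ioi ξ) volume := by
            refine ⟨hψc.aestronglyMeasurable measurableSet_Ioi, ?_⟩
            rw [hasFiniteIntegral_iff_ofReal hψnn]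
            exact hlt
          apply hnat
          have hne : lam - r ≠ 0 := by linarith
          have heq : (fun s => (2 / ((σ s)^2 * γ s)) * ∫ x in ξ..s, γ x)
              = (fun s => (1/(lam-r)) * (2*(lam-r) * (g s * ∫ x in ξ..s, γ x))) := by
            funext s
            show 2 / ((σ s)^2 * γ s) * (∫ x in ξ..s, γ x)
              = (1/(lam-r)) * (2*(lam-r) * ((1 / ((σ s)^2 * γ s)) * ∫ x in ξ..s, γ x))
            rw [show (1/(lam-r)) * (2*(lam-r) * ((1 / ((σ s)^2 * γ s)) * ∫ x in ξ..s, γ x))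
              = ((lam-r)/(lam-r)) * (2 * ((1 / ((σ s)^2 * γ s)) * ∫ x in ξ..s, γ x)) by ring,
              div_self hne, one_mul]
            ring
          rw [heq]
          exact hψint.const_mul _
      _ = ∫⁻ s in Ioi ξ, ∫⁻ t in Ioi ξ, Φ t s := by
          apply setLIntegral_congr_fun measurableSet_Ioi
          intro s hs
          beta_reduce
          have hpt : ∀ t, Φ t s = (Iio s).indicator
              (fun t => ENNReal.ofReal (2*(lam-r) * γ t) * ENNReal.ofReal (g s)) t := by
            intro t
            by_cases hp : t < s <;>
              simp [hΦ_def, indicator_apply, mem_Ioi, mem_Iio, hp]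
          rw [lintegral_congr hpt, lintegral_indicator measurableSet_Iio,
            Measure.restrict_restrict measurableSet_Iio,
            show Iio s ∩ Ioi ξ = Ioo ξ s by rw [inter_comm]; exact Ioi_inter_Iio,
            lintegral_mul_const' _ _ ENNReal.ofReal_ne_top]
          have hγint : IntegrableOn (fun t => 2*(lam-r) * γ t) (Ioo ξ s) volume := by
            apply IntegrableOn.mono_set _ Ioo_subset_Icc_self
            apply ContinuousOn.integrableOn_Icc
            apply continuousOn_const.mul (hγc.mono ?_)
            intro t ht
            exact lt_of_lt_of_le hξ ht.1
          have hγnn : 0 ≤ᶠ[ae (volume.restrict (Ioo ξ s))] (fun t => 2*(lam-r) * γ t) :=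
            Filter.Eventually.of_forall (fun t => mul_nonneg (le_of_lt hc0) (le_of_lt (hγpos t)))
          rw [← ofReal_integral_eq_lintegral_ofReal hγint hγnn,
            ← ENNReal.ofReal_mul
              (setIntegral_nonneg measurableSet_Ioo
                (fun t _ => mul_nonneg hc0.le (hγpos t).le))]
          congr 1
          rw [show (∫ t in Ioo ξ s, 2*(lam-r) * γ t) = 2*(lam-r) * ∫ t in Ioo ξ s, γ t from
              MeasureTheory.integral_const_mul _ _,
            ← integral_Ioc_eq_integral_Ioo, ← intervalIntegral.integral_of_le (le_of_lt hs)]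
          ring
      _ = ∫⁻ t in Ioi ξ, ∫⁻ s in Ioi ξ, Φ t s := (lintegral_lintegral_swap hswapmeas).symm
      _ = ∫⁻ t in Ioi ξ, ENNReal.ofReal (2*(lam-r) * (γ t * G t)) := by
          apply setLIntegral_congr_fun measurableSet_Ioi
          intro t ht
          rw [hΦ_def]
          beta_reduce
          rw [lintegral_indicator measurableSet_Ioi,
            Measure.restrict_restrict measurableSet_Ioi,
            inter_eq_left.mpr (Ioi_subset_Ioi (le_of_lt ht)),
            lintegral_const_mul' _ _ ENNReal.ofReal_ne_top]
          have hgnn : 0 ≤ᶠ[ae (volume.restrict (Ioi t))] g := by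
            filter_upwards [ae_restrict_mem measurableSet_Ioi] with s hs
            exact le_of_lt (hgpos s (lt_trans (lt_trans hξ ht) hs))
          rw [← ofReal_integral_eq_lintegral_ofReal
              (hgint.mono_set (Ioi_subset_Ioi (le_of_lt ht))) hgnn,
            ← ENNReal.ofReal_mul (mul_nonneg hc0.le (hγpos t).le)]
          congr 1
          show 2*(lam-r) * γ t * G t = 2*(lam-r) * (γ t * G t)
          ring
      _ ≤ ∫⁻ t in Ioi ξ, ENNReal.ofReal (deriv h t) := by
          apply lintegral_mono_ae
          filter_upwards [ae_restrict_mem measurableSet_Ioi] with t ht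
          exact ENNReal.ofReal_le_ofReal (hlb t (le_of_lt ht))
  -- conclude
  have hmeasF : Measurable (fun t => ENNReal.ofReal (deriv h t)) :=
    ENNReal.measurable_ofReal.comp (measurable_deriv h)
  have hseq : (⨆ n : ℕ, ∫⁻ t in Ioc ξ (ξ + n), ENNReal.ofReal (deriv h t)) = ⊤ := by
    have hmonoI : Monotone (fun n : ℕ =>
        (Ioc ξ (ξ + n)).indicator (fun t => ENNReal.ofReal (deriv h t))) := by
      intro m n hmn
      apply indicator_le_indicator_of_subset
      · exact Ioc_subset_Ioc_right (by have := (Nat.cast_le (α := ℝ)).mpr hmn; linarith)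
      · exact fun a => zero_le'
    have hsup : ∀ t, (⨆ n : ℕ, (Ioc ξ (ξ + n)).indicator
        (fun t => ENNReal.ofReal (deriv h t)) t)
        = (Ioi ξ).indicator (fun t => ENNReal.ofReal (deriv h t)) t := by
      intro t
      by_cases ht : ξ < t
      · obtain ⟨n, hn⟩ := exists_nat_ge (t - ξ)
        apply le_antisymm
        · apply iSup_le
          intro m
          by_cases hm : t ∈ Ioc ξ (ξ + m)
          · rw [indicator_of_mem hm, indicator_of_mem (mem_Ioi.mpr ht)]
          · rw [indicator_of_notMem hm]; exact zero_le'
        · have hmem : t ∈ Ioc ξ (ξ + n) := ⟨ht, by linarith⟩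
          rw [indicator_of_mem (mem_Ioi.mpr ht)]
          calc ENNReal.ofReal (deriv h t)
              = (Ioc ξ (ξ + n)).indicator (fun t => ENNReal.ofReal (deriv h t)) t :=
                (indicator_of_mem hmem (fun t => ENNReal.ofReal (deriv h t))).symm
            _ ≤ _ := le_iSup (fun m : ℕ => (Ioc ξ (ξ + (m:ℝ))).indicator
                (fun t => ENNReal.ofReal (deriv h t)) t) n
      · have h0 : ∀ m : ℕ, (Ioc ξ (ξ + (m:ℝ))).indicator
            (fun t => ENNReal.ofReal (deriv h t)) t = 0 :=
          fun m => indicator_of_notMem (fun hm => ht hm.1) _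
        simp only [h0, iSup_const]
        exact (indicator_of_notMem (by simpa using ht) _).symm
    calc (⨆ n : ℕ, ∫⁻ t in Ioc ξ (ξ + n), ENNReal.ofReal (deriv h t))
        = ⨆ n : ℕ, ∫⁻ t, (Ioc ξ (ξ + n)).indicator (fun t => ENNReal.ofReal (deriv h t)) t := by
          simp_rw [lintegral_indicator measurableSet_Ioc]
      _ = ∫⁻ t, ⨆ n : ℕ, (Ioc ξ (ξ + n)).indicator (fun t => ENNReal.ofReal (deriv h t)) t :=
          (lintegral_iSup (fun n => hmeasF.indicator measurableSet_Ioc) hmonoI).symm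
      _ = ∫⁻ t, (Ioi ξ).indicator (fun t => ENNReal.ofReal (deriv h t)) t := by
          simp_rw [hsup]
      _ = ∫⁻ t in Ioi ξ, ENNReal.ofReal (deriv h t) := lintegral_indicator measurableSet_Ioi _
      _ = ⊤ := key
  rw [tendsto_atTop]
  intro b
  have hb : (ENNReal.ofReal b) < ⨆ n : ℕ, ∫⁻ t in Ioc ξ (ξ + n), ENNReal.ofReal (deriv h t) := by
    rw [hseq]; exact ENNReal.ofReal_lt_top
  obtain ⟨n, hn⟩ := lt_iSup_iff.mp hb
  have hξn : ξ ≤ ξ + (n:ℝ) := le_add_of_nonneg_right (Nat.cast_nonneg n)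
  have hintc : IntegrableOn (deriv h) (Ioc ξ (ξ + n)) volume := by
    apply IntegrableOn.mono_set _ Ioc_subset_Icc_self
    apply ContinuousOn.integrableOn_Icc
    apply hdc.mono
    intro t ht
    exact lt_of_lt_of_le hξ ht.1
  have hdnn : 0 ≤ᶠ[ae (volume.restrict (Ioc ξ (ξ + n)))] (deriv h) := by
    filter_upwards [ae_restrict_mem measurableSet_Ioc] with t ht
    exact le_of_lt (hinc t (lt_trans hξ ht.1))
  have hIoc : (∫⁻ t in Ioc ξ (ξ + n), ENNReal.ofReal (deriv h t))
      = ENNReal.ofReal (∫ t in Ioc ξ (ξ + n), deriv h t) :=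
    (ofReal_integral_eq_lintegral_ofReal hintc hdnn).symm
  have hb2 : b < ∫ t in Ioc ξ (ξ + n), deriv h t := by
    by_contra hcon
    push_neg at hcon
    exact absurd (ENNReal.ofReal_le_ofReal hcon) (not_le.mpr (hIoc ▸ hn))
  have hbn : b ≤ h (ξ + n) := by
    rw [hftc (ξ + n) hξn, intervalIntegral.integral_of_le hξn]
    linarith
  filter_upwards [eventually_ge_atTop (ξ + (n:ℝ))] with x hx
  exact le_trans hbn (hmono.monotoneOn hξn (le_trans hξn hx) hx)
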